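/- arXiv:1804.05464 — 8 statements merged into one kernel-verified Lean document; each statement's English description precedes it below -/
import Mathlib

section
/- Let n ≥ 1 and m₁, …, mₙ ≥ 1 with m = m₁ + ⋯ + mₙ, and let J be a real m × m matrix, block-partitioned according to (m₁, …, mₙ), whose i-th diagonal block J_ii ∈ ℝ^{mᵢ×mᵢ} satisfies vᵀ J_ii v > 0 for every nonzero v ∈ ℝ^{mᵢ}. Then tr(J) = Σᵢ tr(J_ii) > 0, and J has at least one complex eigenvalue with strictly positive real part; in particular it is impossible that every eigenvalue of J has nonpositive real part. -/
open Matrix Polynomial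

/-- If `J` is a real `m × m` matrix block-partitioned according to
`(m₁, …, mₙ)` whose every diagonal block `J_ii` satisfies `vᵀ J_ii v > 0` for all nonzero
`v`, then `tr J = Σᵢ tr J_ii > 0` and `J` has a complex eigenvalue (root of its
characteristic polynomial over `ℂ`) with strictly positive real part; in particular not
all eigenvalues of `J` have nonpositive real part. -/
theorem stmt_0 {n : ℕ} (hn : 1 ≤ n) (m : Fin n → ℕ) (hm : ∀ i, 1 ≤ m i)
    (J : Matrix ((i : Fin n) × Fin (m i)) ((i : Fin n) × Fin (m i)) ℝ)
    (hblocks : ∀ (i : Fin n) (v : Fin (m i) → ℝ), v ≠ 0 →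
      0 < v ⬝ᵥ (Matrix.of fun a b => J ⟨i, a⟩ ⟨i, b⟩) *ᵥ v) :
    J.trace = ∑ i : Fin n, Matrix.trace (Matrix.of fun a b => J ⟨i, a⟩ ⟨i, b⟩) ∧
    0 < J.trace ∧
    (∃ lam ∈ J.charpoly.aroots ℂ, 0 < lam.re) ∧
    ¬ (∀ lam ∈ J.charpoly.aroots ℂ, lam.re ≤ 0) := by
  -- diagonal entries of blocks are positive
  have hdiag : ∀ (i : Fin n) (a : Fin (m i)), 0 < J ⟨i, a⟩ ⟨i, a⟩ := by
    intro i a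
    have h := hblocks i (Pi.single a 1) (by
      intro h
      have := congrFun h a
      simp [Pi.single_eq_same] at this)
    simpa [dotProduct, mulVec, Pi.single_apply, Finset.sum_ite_eq', mul_comm] using h
  have htr : J.trace = ∑ i : Fin n, Matrix.trace (Matrix.of fun a b => J ⟨i, a⟩ ⟨i, b⟩) := by
    rw [Matrix.trace, ← Finset.univ_sigma_univ, Finset.sum_sigma]
    rfl
  have htrpos : 0 < J.trace := by
    rw [htr]
    apply Finset.sum_pos
    · intro i _
      rw [Matrix.trace]
      apply Finset.sum_pos
      · intro a _
        exact hdiag i a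
      · haveI : Nonempty (Fin (m i)) := Fin.pos_iff_nonempty.mp (by have := hm i; omega)
        exact Finset.univ_nonempty
    · haveI : Nonempty (Fin n) := Fin.pos_iff_nonempty.mp (by omega)
      exact Finset.univ_nonempty
  -- sum of complex roots equals trace
  have hsum : (J.charpoly.aroots ℂ).sum = (J.trace : ℂ) := by
    have h1 : (J.map (algebraMap ℝ ℂ)).trace = ((J.map (algebraMap ℝ ℂ)).charpoly).roots.sum :=
      Matrix.trace_eq_sum_roots_charpoly _
    rw [Matrix.charpoly_map] at h1
    rw [Polynomial.aroots, ← h1]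
    simp [Matrix.trace, Matrix.map_apply, map_sum]
  have hex : ∃ lam ∈ J.charpoly.aroots ℂ, 0 < lam.re := by
    by_contra h
    push_neg at h
    have : ((J.charpoly.aroots ℂ).sum).re ≤ 0 := by
      rw [← Complex.coe_reAddGroupHom, map_multiset_sum]
      calc ((J.charpoly.aroots ℂ).map Complex.reAddGroupHom).sum
          ≤ ((J.charpoly.aroots ℂ).map (fun _ => (0:ℝ))).sum :=
            Multiset.sum_map_le_sum_map _ _ (fun i hi => h i hi)
        _ = 0 := by simp
    rw [hsum] at this
    simp at this
    linarith
  exact ⟨htr, htrpos, hex, fun h => by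
    obtain ⟨lam, hmem, hre⟩ := hex
    linarith [h lam hmem]⟩
end

section
/- Fix real numbers a, b, c, d with a > 0, d > 0, and a·d < b·c. Consider the two-player game on ℝ × ℝ with costs f₁(x₁, x₂) = (a/2)x₁² + b·x₁x₂ and f₂(x₁, x₂) = (d/2)x₂² + c·x₁x₂, and let ω(x₁, x₂) = (∂f₁/∂x₁, ∂f₂/∂x₂) = (a·x₁ + b·x₂, c·x₁ + d·x₂). Then: (i) (0,0) is a zero of ω, ∂²f₁/∂x₁²(0,0) = a > 0, ∂²f₂/∂x₂²(0,0) = d > 0, and det Dω(0,0) = a·d − b·c ≠ 0, so (0,0) is a nondegenerate differential Nash equilibrium; (ii) (0,0) is a local Nash equilibrium: f₁(x₁, 0) ≥ f₁(0,0) for all x₁ and f₂(0, x₂) ≥ f₂(0,0) for all x₂; (iii) the Jacobian Dω(0,0) = [[a, b],[c, d]] has one strictly negative and one strictly positive real eigenvalue, i.e., (0,0) is a strict saddle point of ẋ = −ω(x). -/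
open Matrix Polynomial

/-- For `a > 0`, `d > 0`, `a·d < b·c`, the game with costs
`f₁(x₁,x₂) = (a/2)x₁² + b·x₁x₂` and `f₂(x₁,x₂) = (d/2)x₂² + c·x₁x₂` has
`ω(x₁,x₂) = (a·x₁ + b·x₂, c·x₁ + d·x₂)`; the origin is a zero of `ω` with
`∂²f₁/∂x₁² = a > 0`, `∂²f₂/∂x₂² = d > 0`, `det Dω(0,0) ≠ 0` (a nondegenerate differential
Nash equilibrium), it is a local (indeed global in each player's variable) Nash
equilibrium, and the Jacobian `Dω(0,0) = [[a,b],[c,d]]` has one strictly negative and one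
strictly positive real eigenvalue — a strict saddle of `ẋ = -ω(x)`. -/
theorem stmt_3 (a b c d : ℝ) (ha : 0 < a) (hd : 0 < d) (hsad : a * d < b * c)
    (f₁ f₂ : ℝ → ℝ → ℝ)
    (hf₁ : ∀ x₁ x₂, f₁ x₁ x₂ = a / 2 * x₁ ^ 2 + b * x₁ * x₂)
    (hf₂ : ∀ x₁ x₂, f₂ x₁ x₂ = d / 2 * x₂ ^ 2 + c * x₁ * x₂) :
    -- ω is the vector of the players' own partial derivatives
    (∀ x₁ x₂ : ℝ, deriv (fun y => f₁ y x₂) x₁ = a * x₁ + b * x₂) ∧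
    (∀ x₁ x₂ : ℝ, deriv (fun y => f₂ x₁ y) x₂ = c * x₁ + d * x₂) ∧
    -- (i) the origin is a zero of ω, the own-block second derivatives are a, d > 0,
    -- and the Jacobian is nondegenerate
    (a * 0 + b * 0 = 0 ∧ c * 0 + d * 0 = 0) ∧
    (∀ x₁ x₂ : ℝ, deriv (deriv (fun y => f₁ y x₂)) x₁ = a) ∧
    (∀ x₁ x₂ : ℝ, deriv (deriv (fun y => f₂ x₁ y)) x₂ = d) ∧
    (!![a, b; c, d]).det = a * d - b * c ∧ (!![a, b; c, d]).det ≠ 0 ∧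
    -- (ii) the origin is a local Nash equilibrium
    (∀ x₁ : ℝ, f₁ 0 0 ≤ f₁ x₁ 0) ∧ (∀ x₂ : ℝ, f₂ 0 0 ≤ f₂ 0 x₂) ∧
    -- (iii) the Jacobian has one negative and one positive real eigenvalue
    (∃ lm lp : ℝ, lm < 0 ∧ 0 < lp ∧
      (!![a, b; c, d]).charpoly.aroots ℂ = {(lm : ℂ), (lp : ℂ)}) := by
  have hd1 : ∀ x₁ x₂ : ℝ, deriv (fun y => f₁ y x₂) x₁ = a * x₁ + b * x₂ := by
    intro x₁ x₂
    have hfun : (fun y => f₁ y x₂) = fun y => a / 2 * y ^ 2 + b * y * x₂ :=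
      funext fun y => hf₁ y x₂
    rw [hfun]
    have h := (((hasDerivAt_pow 2 x₁).const_mul (a / 2)).add
      (((hasDerivAt_id x₁).const_mul b).mul_const x₂)).deriv
    simp only [id_eq, Pi.add_def] at h
    rw [h]; push_cast; ring
  have hd2 : ∀ x₁ x₂ : ℝ, deriv (fun y => f₂ x₁ y) x₂ = c * x₁ + d * x₂ := by
    intro x₁ x₂
    have hfun : (fun y => f₂ x₁ y) = fun y => d / 2 * y ^ 2 + c * x₁ * y :=
      funext fun y => hf₂ x₁ y
    rw [hfun]
    have h := (((hasDerivAt_pow 2 x₂).const_mul (d / 2)).add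
      ((hasDerivAt_id x₂).const_mul (c * x₁))).deriv
    simp only [id_eq, Pi.add_def] at h
    rw [h]; push_cast; ring
  have hdet : (!![a, b; c, d]).det = a * d - b * c := by
    rw [Matrix.det_fin_two]; simp
  refine ⟨hd1, hd2, by norm_num, ?_, ?_, hdet, ?_, ?_, ?_, ?_⟩
  · intro x₁ x₂
    have heq : deriv (fun y => f₁ y x₂) = fun y => a * y + b * x₂ :=
      funext fun y => hd1 y x₂
    rw [heq]
    have h := (((hasDerivAt_id x₁).const_mul a).add_const (b * x₂)).deriv
    simp only [id_eq] at h
    rw [h]; ring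
  · intro x₁ x₂
    have heq : deriv (fun y => f₂ x₁ y) = fun y => c * x₁ + d * y :=
      funext fun y => hd2 x₁ y
    rw [heq]
    have h := (((hasDerivAt_id x₂).const_mul d).const_add (c * x₁)).deriv
    simp only [id_eq] at h
    rw [h]; ring
  · rw [hdet]; nlinarith
  · intro x₁; rw [hf₁, hf₁]; nlinarith [sq_nonneg x₁]
  · intro x₂; rw [hf₂, hf₂]; nlinarith [sq_nonneg x₂]
  · set s : ℝ := Real.sqrt ((a + d) ^ 2 + 4 * (b * c - a * d)) with hs
    have hdisc : 0 < (a + d) ^ 2 + 4 * (b * c - a * d) := by nlinarith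
    have hs2 : s ^ 2 = (a + d) ^ 2 + 4 * (b * c - a * d) := Real.sq_sqrt hdisc.le
    have hsgt : |a + d| < s := by
      rw [← Real.sqrt_sq_eq_abs, hs]
      exact Real.sqrt_lt_sqrt (sq_nonneg _) (by nlinarith)
    refine ⟨(a + d - s) / 2, (a + d + s) / 2, by
        cases abs_lt.mp hsgt; linarith, by
        cases abs_lt.mp hsgt; linarith, ?_⟩
    set lm : ℝ := (a + d - s) / 2 with hlm
    set lp : ℝ := (a + d + s) / 2 with hlp
    have hsum : lm + lp = a + d := by rw [hlm, hlp]; ring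
    have hprod : lm * lp = a * d - b * c := by
      have h4 : lm * lp = ((a + d) ^ 2 - s ^ 2) / 4 := by rw [hlm, hlp]; ring
      rw [h4, hs2]; ring
    have hcp2 : (!![a, b; c, d]).charpoly = X ^ 2 - C (a + d) * X + C (a * d - b * c) := by
      rw [Matrix.charpoly, Matrix.det_fin_two]
      simp [charmatrix_apply_eq, charmatrix_apply_ne, C_add, C_sub, C_mul]
      ring
    have hcp : (!![a, b; c, d]).charpoly = (X - C lm) * (X - C lp) := by
      rw [hcp2, ← hsum, ← hprod]
      simp only [C_add, C_mul]; ring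
    rw [Polynomial.aroots_def, hcp]
    simp only [Polynomial.map_mul, Polynomial.map_sub, Polynomial.map_X, Polynomial.map_C,
      Complex.coe_algebraMap]
    rw [Polynomial.roots_mul (mul_ne_zero (X_sub_C_ne_zero _) (X_sub_C_ne_zero _)),
      Polynomial.roots_X_sub_C, Polynomial.roots_X_sub_C]
    rfl
end

section
/- Fix real numbers a, b, c, d with a > 0, d < 0, a + d > 0, and a·d > c·b. Consider the two-player game on ℝ × ℝ with costs f₁(x₁, x₂) = (a/2)x₁² + b·x₁x₂ and f₂(x₁, x₂) = (d/2)x₂² + c·x₁x₂, and let ω(x₁, x₂) = (a·x₁ + b·x₂, c·x₁ + d·x₂). Then: (i) (0,0) is the unique zero of ω; (ii) both complex eigenvalues of the Jacobian Dω = [[a, b],[c, d]] have strictly positive real part, so (0,0) is a locally asymptotically stable equilibrium of ẋ = −ω(x); (iii) (0,0) is not a local Nash equilibrium of (f₁, f₂): for every x₂ ≠ 0, f₂(0, x₂) = (d/2)x₂² < 0 = f₂(0,0), so player 2 can strictly decrease its cost by arbitrarily small unilateral deviations. -/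
open Matrix Polynomial

/-- For `a > 0`, `d < 0`, `a + d > 0`, `a·d > c·b`, the game with costs
`f₁(x₁,x₂) = (a/2)x₁² + b·x₁x₂`, `f₂(x₁,x₂) = (d/2)x₂² + c·x₁x₂` and
`ω(x₁,x₂) = (a·x₁ + b·x₂, c·x₁ + d·x₂)` satisfies: (i) the origin is the unique zero of
`ω`; (ii) both eigenvalues of `Dω = [[a,b],[c,d]]` have strictly positive real part, so
the origin is locally asymptotically stable for `ẋ = -ω(x)`; (iii) the origin is not a
local Nash equilibrium: player 2 strictly decreases its cost by any nonzero unilateral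
deviation. -/
theorem stmt_4 (a b c d : ℝ) (ha : 0 < a) (hd : d < 0) (htr : 0 < a + d)
    (hdet : c * b < a * d)
    (f₁ f₂ : ℝ → ℝ → ℝ)
    (hf₁ : ∀ x₁ x₂, f₁ x₁ x₂ = a / 2 * x₁ ^ 2 + b * x₁ * x₂)
    (hf₂ : ∀ x₁ x₂, f₂ x₁ x₂ = d / 2 * x₂ ^ 2 + c * x₁ * x₂) :
    -- ω is the vector of the players' own partial derivatives
    (∀ x₁ x₂ : ℝ, deriv (fun y => f₁ y x₂) x₁ = a * x₁ + b * x₂) ∧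
    (∀ x₁ x₂ : ℝ, deriv (fun y => f₂ x₁ y) x₂ = c * x₁ + d * x₂) ∧
    -- (i) the origin is the unique zero of ω
    (∀ x₁ x₂ : ℝ, (a * x₁ + b * x₂ = 0 ∧ c * x₁ + d * x₂ = 0) ↔ (x₁ = 0 ∧ x₂ = 0)) ∧
    -- (ii) every eigenvalue of the Jacobian has strictly positive real part
    (∀ lam ∈ (!![a, b; c, d]).charpoly.aroots ℂ, 0 < lam.re) ∧
    -- (iii) the origin is not a local Nash equilibrium: player 2 deviates profitably
    (∀ x₂ : ℝ, x₂ ≠ 0 → f₂ 0 x₂ < f₂ 0 0) := by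
  refine ⟨?_, ?_, ?_, ?_, ?_⟩
  · intro x₁ x₂
    have h : HasDerivAt (fun y => f₁ y x₂) (a * x₁ + b * x₂) x₁ := by
      simp only [hf₁]
      have h1 := (hasDerivAt_pow 2 x₁).const_mul (a / 2)
      have h2 := ((hasDerivAt_id x₁).mul_const x₂).const_mul b
      convert h1.add h2 using 1
      · rfl
      · rfl
      · funext y; simp [id]; ring
      · norm_num; ring
    exact h.deriv
  · intro x₁ x₂
    have h : HasDerivAt (fun y => f₂ x₁ y) (c * x₁ + d * x₂) x₂ := by
      simp only [hf₂]
      have h1 := (hasDerivAt_pow 2 x₂).const_mul (d / 2)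
      have h2 := ((hasDerivAt_id x₂).const_mul x₁).const_mul c
      convert h1.add h2 using 1
      · rfl
      · rfl
      · funext y; simp [id]; ring
      · norm_num; ring
    exact h.deriv
  · intro x₁ x₂
    constructor
    · rintro ⟨h1, h2⟩
      have hD : 0 < a * d - b * c := by nlinarith
      have e1 : (a * d - b * c) * x₁ = 0 := by linear_combination d * h1 - b * h2
      have e2 : (a * d - b * c) * x₂ = 0 := by linear_combination a * h2 - c * h1
      exact ⟨by nlinarith [mul_self_nonneg x₁], by nlinarith [mul_self_nonneg x₂]⟩
    · rintro ⟨h1, h2⟩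
      simp [h1, h2]
  · intro lam hlam
    have hcp : (!![a, b; c, d]).charpoly = X^2 - C (a+d) * X + C (a*d - b*c) := by
      simp [Matrix.charpoly, Matrix.det_fin_two, charmatrix_apply]
      ring
    rw [mem_aroots] at hlam
    have heval := hlam.2
    rw [hcp] at heval
    simp [Polynomial.aeval_def, Polynomial.eval₂_add, Polynomial.eval₂_sub] at heval
    -- heval : lam^2 - (a+d)*lam + (a*d - b*c) = 0 (in ℂ, with coercions)
    rw [Complex.ext_iff] at heval
    obtain ⟨hre, him⟩ := heval
    simp [pow_two, Complex.mul_re, Complex.mul_im] at hre him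
    have him' : lam.im * (2 * lam.re - (a + d)) = 0 := by linear_combination him
    rcases mul_eq_zero.mp him' with hy | hy
    · rw [hy] at hre
      by_contra hx
      push_neg at hx
      nlinarith [sq_nonneg lam.re]
    · linarith
  · intro x₂ hx
    have h2 : 0 < x₂ ^ 2 := by positivity
    rw [hf₂, hf₂]
    nlinarith
end

section
/- Let A ∈ ℝ^{m₁×m₁} and C ∈ ℝ^{m₂×m₂} be symmetric positive definite matrices and let B ∈ ℝ^{m₁×m₂} be arbitrary. Form the (m₁+m₂) × (m₁+m₂) block matrix M = [[A, B],[−Bᵀ, C]]. Then vᵀ M v > 0 for every nonzero v ∈ ℝ^{m₁+m₂}, M is invertible, and every complex eigenvalue of M has strictly positive real part. -/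
open Matrix Polynomial

lemma my_eval_charpoly {n : Type*} [Fintype n] [DecidableEq n] {R : Type*} [CommRing R]
    (M : Matrix n n R) (μ : R) :
    M.charpoly.eval μ = (Matrix.diagonal (fun _ => μ) - M).det := by
  rw [Matrix.charpoly, ← Polynomial.coe_evalRingHom, RingHom.map_det]
  congr 1
  ext i j
  by_cases h : i = j <;>
    simp [Matrix.charmatrix_apply, Matrix.diagonal, h]

lemma re_quadform {n : Type*} [Fintype n] [DecidableEq n]
    (M : Matrix n n ℝ) (w : n → ℂ) :
    (star w ⬝ᵥ (M.map (algebraMap ℝ ℂ)) *ᵥ w).re =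
      (fun i => (w i).re) ⬝ᵥ M *ᵥ (fun i => (w i).re) +
      (fun i => (w i).im) ⬝ᵥ M *ᵥ (fun i => (w i).im) := by
  simp only [dotProduct, mulVec, dotProduct, Matrix.map_apply, Pi.star_apply,
    Finset.mul_sum, Complex.re_sum]
  rw [← Finset.sum_add_distrib]
  refine Finset.sum_congr rfl fun i _ => ?_
  rw [← Finset.sum_add_distrib]
  refine Finset.sum_congr rfl fun j _ => ?_
  simp [Complex.mul_re, Complex.mul_im, RCLike.star_def]

lemma re_pos_of_quadform_pos {n : Type*} [Fintype n] [DecidableEq n]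
    (M : Matrix n n ℝ) (hM : ∀ v : n → ℝ, v ≠ 0 → 0 < v ⬝ᵥ M *ᵥ v)
    (lam : ℂ) (hlam : lam ∈ M.charpoly.aroots ℂ) : 0 < lam.re := by
  rw [Polynomial.aroots_def, Polynomial.mem_roots] at hlam
  · have hev : ((M.map (algebraMap ℝ ℂ)).charpoly).eval lam = 0 := by
      rw [Matrix.charpoly_map]
      exact hlam
    rw [my_eval_charpoly] at hev
    obtain ⟨w, hw0, hw⟩ := (Matrix.exists_mulVec_eq_zero_iff).2 hev
    have hMw : (M.map (algebraMap ℝ ℂ)) *ᵥ w = lam • w := by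
      rw [Matrix.sub_mulVec, sub_eq_zero] at hw
      rw [← hw]
      funext i
      simp [Matrix.mulVec_diagonal]
    -- the quadratic form identity
    set u : n → ℝ := fun i => (w i).re with hu
    set v : n → ℝ := fun i => (w i).im with hv
    have hq : (star w ⬝ᵥ (M.map (algebraMap ℝ ℂ)) *ᵥ w).re = u ⬝ᵥ M *ᵥ u + v ⬝ᵥ M *ᵥ v :=
      re_quadform M w
    have hsw : (star w ⬝ᵥ (M.map (algebraMap ℝ ℂ)) *ᵥ w) = lam * (star w ⬝ᵥ w) := by
      rw [hMw, dotProduct_smul, smul_eq_mul]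
    have hwre : (star w ⬝ᵥ w).re = ∑ i, Complex.normSq (w i) := by
      simp [dotProduct, Complex.re_sum, Complex.normSq_apply, Complex.mul_re, RCLike.star_def]
    have hwim : (star w ⬝ᵥ w).im = 0 := by
      simp [dotProduct, Complex.im_sum, Complex.mul_im, RCLike.star_def, mul_comm]
    have hnorm_pos : 0 < (star w ⬝ᵥ w).re := by
      rw [hwre]
      have : ∃ i, w i ≠ 0 := by
        by_contra h
        push_neg at h
        exact hw0 (funext h)
      obtain ⟨i, hi⟩ := this
      exact Finset.sum_pos' (fun j _ => Complex.normSq_nonneg _)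
        ⟨i, Finset.mem_univ i, Complex.normSq_pos.2 hi⟩
    have hquad_pos : 0 < u ⬝ᵥ M *ᵥ u + v ⬝ᵥ M *ᵥ v := by
      rcases eq_or_ne u 0 with h1 | h1
      · have h2 : v ≠ 0 := by
          intro h2
          apply hw0
          funext i
          have : (w i).re = 0 := congrFun h1 i
          have : (w i).im = 0 := congrFun h2 i
          exact Complex.ext (congrFun h1 i) (congrFun h2 i)
        have : u ⬝ᵥ M *ᵥ u = 0 := by rw [h1]; simp
        rw [this, zero_add]
        exact hM v h2
      · rcases eq_or_ne v 0 with h2 | h2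
        · have : v ⬝ᵥ M *ᵥ v = 0 := by rw [h2]; simp
          rw [this, add_zero]
          exact hM u h1
        · exact add_pos (hM u h1) (hM v h2)
    have : lam.re * (star w ⬝ᵥ w).re = u ⬝ᵥ M *ᵥ u + v ⬝ᵥ M *ᵥ v := by
      rw [← hq, hsw, Complex.mul_re, hwim, mul_zero, sub_zero]
    nlinarith [this]
  · exact ((Matrix.charpoly_monic M).map (algebraMap ℝ ℂ)).ne_zero

/-- If `A`, `C` are symmetric positive definite and `B` is arbitrary,
then the block matrix `M = [[A, B], [-Bᵀ, C]]` satisfies `vᵀ M v > 0` for all nonzero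
`v`, is invertible, and all of its complex eigenvalues (roots of its characteristic
polynomial over `ℂ`) have strictly positive real part. -/

theorem stmt_5 {m₁ m₂ : ℕ}
    (A : Matrix (Fin m₁) (Fin m₁) ℝ) (C : Matrix (Fin m₂) (Fin m₂) ℝ)
    (B : Matrix (Fin m₁) (Fin m₂) ℝ) (hA : A.PosDef) (hC : C.PosDef) :
    (∀ v : Fin m₁ ⊕ Fin m₂ → ℝ, v ≠ 0 →
      0 < v ⬝ᵥ (Matrix.fromBlocks A B (-Bᵀ) C) *ᵥ v) ∧
    IsUnit (Matrix.fromBlocks A B (-Bᵀ) C) ∧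
    (∀ lam ∈ (Matrix.fromBlocks A B (-Bᵀ) C).charpoly.aroots ℂ, 0 < lam.re) := by
  set M := Matrix.fromBlocks A B (-Bᵀ) C with hMdef
  have quad : ∀ v : Fin m₁ ⊕ Fin m₂ → ℝ,
      v ⬝ᵥ M *ᵥ v = (v ∘ Sum.inl) ⬝ᵥ A *ᵥ (v ∘ Sum.inl) +
        (v ∘ Sum.inr) ⬝ᵥ C *ᵥ (v ∘ Sum.inr) := by
    intro v
    set x := v ∘ Sum.inl
    set y := v ∘ Sum.inr
    have hv : v = Sum.elim x y := by funext i; cases i <;> rfl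
    rw [hv, hMdef, Matrix.fromBlocks_mulVec, sumElim_dotProduct_sumElim,
      dotProduct_add, dotProduct_add]
    have h1 : y ⬝ᵥ (-Bᵀ) *ᵥ x = - (x ⬝ᵥ B *ᵥ y) := by
      rw [Matrix.neg_mulVec, dotProduct_neg]
      congr 1
      rw [Matrix.dotProduct_mulVec y Bᵀ x, Matrix.vecMul_transpose, dotProduct_comm]
    simp only [Sum.elim_comp_inl, Sum.elim_comp_inr]
    rw [h1]
    ring
  have part1 : ∀ v : Fin m₁ ⊕ Fin m₂ → ℝ, v ≠ 0 → 0 < v ⬝ᵥ M *ᵥ v := by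
    intro v hv
    rw [quad v]
    have hApos : ∀ x : Fin m₁ → ℝ, x ≠ 0 → 0 < x ⬝ᵥ A *ᵥ x := by
      intro x hx
      have := hA.dotProduct_mulVec_pos hx
      simpa using this
    have hCpos : ∀ y : Fin m₂ → ℝ, y ≠ 0 → 0 < y ⬝ᵥ C *ᵥ y := by
      intro y hy
      have := hC.dotProduct_mulVec_pos hy
      simpa using this
    rcases eq_or_ne (v ∘ Sum.inl) 0 with h1 | h1
    · have h2 : v ∘ Sum.inr ≠ 0 := by
        intro h2
        apply hv
        funext i
        cases i with
        | inl i => exact congrFun h1 i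
        | inr i => exact congrFun h2 i
      rw [h1]
      simpa using hCpos _ h2
    · rcases eq_or_ne (v ∘ Sum.inr) 0 with h2 | h2
      · rw [h2]
        simpa using hApos _ h1
      · exact add_pos (hApos _ h1) (hCpos _ h2)
  refine ⟨part1, ?_, ?_⟩
  · rw [Matrix.isUnit_iff_isUnit_det, isUnit_iff_ne_zero]
    intro hdet
    obtain ⟨w, hw0, hw⟩ := Matrix.exists_mulVec_eq_zero_iff.2 hdet
    have := part1 w hw0
    rw [hw] at this
    simp at this
  · intro lam hlam
    exact re_pos_of_quadform_pos M part1 lam hlam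
end

section
/- Fix real numbers a, b, c with a > c > 0 and b² > a·c. Consider the two-player zero-sum game (f, −f) on ℝ × ℝ with f(x₁, x₂) = (a/2)x₁² + b·x₁x₂ + (c/2)x₂², and let ω(x₁, x₂) = (∂f/∂x₁, −∂f/∂x₂) = (a·x₁ + b·x₂, −b·x₁ − c·x₂). Then: (i) (0,0) is the unique zero of ω; (ii) both complex eigenvalues of the Jacobian Dω = [[a, b],[−b, −c]] have strictly positive real part, so (0,0) is a locally asymptotically stable equilibrium of ẋ = −ω(x); (iii) (0,0) is not a local Nash equilibrium of (f, −f): for every x₂ ≠ 0, −f(0, x₂) = −(c/2)x₂² < 0 = −f(0, 0), so the second player (whose cost is −f) can strictly decrease its cost by arbitrarily small unilateral deviations. -/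
open Matrix Polynomial

/-- For `a > c > 0` and `b² > a·c`, the zero-sum game `(f, -f)` with
`f(x₁,x₂) = (a/2)x₁² + b·x₁x₂ + (c/2)x₂²` and
`ω(x₁,x₂) = (∂f/∂x₁, -∂f/∂x₂) = (a·x₁ + b·x₂, -b·x₁ - c·x₂)` satisfies: (i) the origin
is the unique zero of `ω`; (ii) both eigenvalues of `Dω = [[a,b],[-b,-c]]` have strictly
positive real part, so the origin is locally asymptotically stable for `ẋ = -ω(x)`;
(iii) the origin is not a local Nash equilibrium: the second player (cost `-f`) strictly
decreases its cost by any nonzero unilateral deviation. -/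
theorem stmt_7 (a b c : ℝ) (hc : 0 < c) (hca : c < a) (hb : a * c < b ^ 2)
    (f : ℝ → ℝ → ℝ)
    (hf : ∀ x₁ x₂, f x₁ x₂ = a / 2 * x₁ ^ 2 + b * x₁ * x₂ + c / 2 * x₂ ^ 2) :
    -- ω is (player 1's own partial of f, player 2's own partial of -f)
    (∀ x₁ x₂ : ℝ, deriv (fun y => f y x₂) x₁ = a * x₁ + b * x₂) ∧
    (∀ x₁ x₂ : ℝ, deriv (fun y => -f x₁ y) x₂ = -b * x₁ - c * x₂) ∧
    -- (i) the origin is the unique zero of ω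
    (∀ x₁ x₂ : ℝ, (a * x₁ + b * x₂ = 0 ∧ -b * x₁ - c * x₂ = 0) ↔ (x₁ = 0 ∧ x₂ = 0)) ∧
    -- (ii) every eigenvalue of the Jacobian has strictly positive real part
    (∀ lam ∈ (!![a, b; -b, -c]).charpoly.aroots ℂ, 0 < lam.re) ∧
    -- (iii) not a local Nash equilibrium: player 2 deviates profitably
    (∀ x₂ : ℝ, x₂ ≠ 0 → -f 0 x₂ < -f 0 0) := by
  refine ⟨?_, ?_, ?_, ?_, ?_⟩
  · intro x₁ x₂
    have h : (fun y => f y x₂) = fun y : ℝ => a / 2 * y ^ 2 + b * y * x₂ + c / 2 * x₂ ^ 2 :=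
      funext fun y => hf y x₂
    rw [h]
    have H : HasDerivAt (fun y : ℝ => a / 2 * y ^ 2 + b * y * x₂ + c / 2 * x₂ ^ 2)
        (a / 2 * (2 * x₁ ^ 1) + (b * x₂) + 0) x₁ := by
      refine HasDerivAt.add (HasDerivAt.add ?_ ?_) (hasDerivAt_const _ _)
      · exact (hasDerivAt_pow 2 x₁).const_mul (a / 2)
      · simpa [mul_assoc] using ((hasDerivAt_id x₁).const_mul b).mul_const x₂
    rw [H.deriv]; ring
  · intro x₁ x₂
    have h : (fun y => -f x₁ y)
        = fun y : ℝ => -(a / 2 * x₁ ^ 2 + b * x₁ * y + c / 2 * y ^ 2) :=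
      funext fun y => by rw [hf]
    rw [h]
    have H : HasDerivAt (fun y : ℝ => a / 2 * x₁ ^ 2 + b * x₁ * y + c / 2 * y ^ 2)
        (0 + b * x₁ + c / 2 * (2 * x₂ ^ 1)) x₂ := by
      refine HasDerivAt.add (HasDerivAt.add (hasDerivAt_const _ _) ?_) ?_
      · simpa using (hasDerivAt_id x₂).const_mul (b * x₁)
      · exact (hasDerivAt_pow 2 x₂).const_mul (c / 2)
    have H' : HasDerivAt (fun y : ℝ => -(a / 2 * x₁ ^ 2 + b * x₁ * y + c / 2 * y ^ 2))
        (-(0 + b * x₁ + c / 2 * (2 * x₂ ^ 1))) x₂ := H.neg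
    rw [H'.deriv]; ring
  · intro x₁ x₂
    constructor
    · rintro ⟨h1, h2⟩
      have hx1 : x₁ = 0 := by
        have h3 : (a * c - b ^ 2) * x₁ = 0 := by linear_combination c * h1 + b * h2
        have : a * c - b ^ 2 ≠ 0 := by nlinarith
        exact (mul_eq_zero.mp h3).resolve_left this
      have hx2 : x₂ = 0 := by
        rw [hx1] at h2
        have : c * x₂ = 0 := by linarith
        exact (mul_eq_zero.mp this).resolve_left (ne_of_gt hc)
      exact ⟨hx1, hx2⟩
    · rintro ⟨rfl, rfl⟩; norm_num
  · intro lam hlam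
    have hcp : (!![a, b; -b, -c]).charpoly = X ^ 2 - C (a - c) * X + C (b ^ 2 - a * c) := by
      rw [Matrix.charpoly, Matrix.det_fin_two]
      simp [charmatrix_apply]
      ring
    rw [hcp, mem_aroots] at hlam
    have heq : lam ^ 2 - (↑(a - c)) * lam + (↑(b ^ 2 - a * c)) = 0 := by
      have := hlam.2
      simpa using this
    set x := lam.re with hx
    set y := lam.im with hy
    have hre : x ^ 2 - y ^ 2 - (a - c) * x + (b ^ 2 - a * c) = 0 := by
      have := congrArg Complex.re heq
      simpa [Complex.add_re, Complex.sub_re, Complex.mul_re, pow_two] using this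
    have him : 2 * x * y - (a - c) * y = 0 := by
      have := congrArg Complex.im heq
      simp [Complex.add_im, Complex.sub_im, Complex.mul_im, pow_two] at this
      linarith
    by_cases hy0 : y = 0
    · rw [hy0] at hre
      nlinarith
    · have : 2 * x = a - c := by
        have h4 : y * (2 * x - (a - c)) = 0 := by ring_nf; linarith [him]
        have := (mul_eq_zero.mp h4).resolve_left hy0
        linarith
      linarith
  · intro x₂ hx₂
    rw [hf, hf]
    have : 0 < x₂ ^ 2 := by positivity
    nlinarith
end

section
/- Let φ : ℝ^m → ℝ be twice continuously differentiable, let m = m₁ + ⋯ + mₙ be a block decomposition of the coordinates, and consider the potential game (f₁, …, fₙ) in which Dᵢfᵢ(x) = Dᵢφ(x) for each i, so that ω(x) = ∇φ(x) and Dω(x) = D²φ(x), the (symmetric) Hessian of φ. Suppose x* is a locally asymptotically stable equilibrium of ẋ = −ω(x), i.e., ∇φ(x*) = 0 and every complex eigenvalue of D²φ(x*) has strictly positive real part. Then D²φ(x*) is positive definite, det D²φ(x*) ≠ 0, and each diagonal block Dᵢ²φ(x*) ∈ ℝ^{mᵢ×mᵢ} (the principal submatrix of D²φ(x*) on the i-th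 coordinate block) is positive definite; hence x* is a nondegenerate differential Nash equilibrium of the game. -/
open Matrix Polynomial

lemma aux_charpoly_eval {k : Type*} [Fintype k] [DecidableEq k] (M : Matrix k k ℝ) (t : ℝ) :
    M.charpoly.eval t = ((t • (1 : Matrix k k ℝ)) - M).det := by
  rw [Matrix.charpoly, ← Polynomial.coe_evalRingHom, RingHom.map_det]
  congr 1
  ext a b
  by_cases h : a = b
  · subst h
    simp [Matrix.charmatrix_apply_eq, Matrix.one_apply, Matrix.smul_apply]
  · simp [Matrix.charmatrix_apply_ne _ _ _ h, Matrix.one_apply, h, Matrix.smul_apply]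

lemma aux_eig_pos {k : Type*} [Fintype k] [DecidableEq k] {M : Matrix k k ℝ}
    (hM : M.IsHermitian)
    (heig : ∀ lam ∈ M.charpoly.aroots ℂ, 0 < lam.re) (i : k) :
    0 < hM.eigenvalues i := by
  set t := hM.eigenvalues i with ht
  have hsp : t ∈ spectrum ℝ M := hM.eigenvalues_mem_spectrum_real i
  rw [spectrum.mem_iff] at hsp
  rw [Algebra.algebraMap_eq_smul_one] at hsp
  have hdet : ((t • (1 : Matrix k k ℝ)) - M).det = 0 := by
    by_contra h
    exact hsp ((Matrix.isUnit_iff_isUnit_det _).2 (isUnit_iff_ne_zero.2 h))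
  have hroot : M.charpoly.eval t = 0 := by rw [aux_charpoly_eval]; exact hdet
  have hmem : (t : ℂ) ∈ M.charpoly.aroots ℂ := by
    rw [Polynomial.mem_aroots]
    refine ⟨M.charpoly_monic.ne_zero, ?_⟩
    have : (algebraMap ℝ ℂ) (M.charpoly.eval t) = 0 := by rw [hroot, map_zero]
    rwa [← Polynomial.aeval_algebraMap_apply_eq_algebraMap_eval] at this
  simpa using heig _ hmem

lemma aux_dot {n : ℕ} {m : Fin n → ℕ} (i : Fin n) (v : Fin (m i) → ℝ)
    (w : ((j : Fin n) × Fin (m j)) → ℝ)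
    (hw : ∀ p : (j : Fin n) × Fin (m j), w p = if h : p.1 = i then v (h ▸ p.2) else 0)
    (g : ((j : Fin n) × Fin (m j)) → ℝ) :
    g ⬝ᵥ w = ∑ q, g ⟨i, q⟩ * v q := by
  rw [dotProduct, ← Finset.univ_sigma_univ, Finset.sum_sigma]
  rw [Finset.sum_eq_single i]
  · simp [hw]
  · intro j _ hj
    apply Finset.sum_eq_zero
    intro p _
    simp [hw, hj]
  · intro h
    exact absurd (Finset.mem_univ i) h

/-- Let `φ : ℝ^m → ℝ` be `C²` with the coordinates split into blocks
`m = m₁ + ⋯ + mₙ`, and consider the potential game where each player's individual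
gradient is the corresponding block of `∇φ`, so `ω = ∇φ` and `Dω = D²φ` (the Hessian).
If `x*` is a locally asymptotically stable equilibrium of `ẋ = -ω(x)`, i.e.
`∇φ(x*) = 0` and every complex eigenvalue of the Hessian `H = D²φ(x*)` has strictly
positive real part, then `H` is symmetric positive definite, `det H ≠ 0`, and every
diagonal block of `H` is positive definite; hence `x*` is a nondegenerate differential
Nash equilibrium. -/
theorem stmt_8 {n : ℕ} (m : Fin n → ℕ)
    (φ : (((i : Fin n) × Fin (m i)) → ℝ) → ℝ)
    (hφ : ContDiff ℝ 2 φ)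
    (xstar : ((i : Fin n) × Fin (m i)) → ℝ)
    (H : Matrix ((i : Fin n) × Fin (m i)) ((i : Fin n) × Fin (m i)) ℝ)
    (hH : ∀ a b, H a b =
      fderiv ℝ (fun x => fderiv ℝ φ x (Pi.single b 1)) xstar (Pi.single a 1))
    (hcrit : fderiv ℝ φ xstar = 0)
    (heig : ∀ lam ∈ H.charpoly.aroots ℂ, 0 < lam.re) :
    H.IsSymm ∧
    (∀ v : ((i : Fin n) × Fin (m i)) → ℝ, v ≠ 0 → 0 < v ⬝ᵥ H *ᵥ v) ∧
    H.det ≠ 0 ∧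
    (∀ i : Fin n, ∀ v : Fin (m i) → ℝ, v ≠ 0 →
      0 < v ⬝ᵥ (Matrix.of fun p q => H ⟨i, p⟩ ⟨i, q⟩) *ᵥ v) := by
  -- second derivative description
  have hd1 : ContDiff ℝ 1 (fderiv ℝ φ) := hφ.fderiv_right (by norm_num)
  have hdiff : DifferentiableAt ℝ (fderiv ℝ φ) xstar :=
    (hd1.differentiable one_ne_zero) xstar
  have hkey : ∀ a b, H a b =
      fderiv ℝ (fderiv ℝ φ) xstar (Pi.single a 1) (Pi.single b 1) := by
    intro a b
    rw [hH a b, fderiv_clm_apply hdiff (differentiableAt_const _)]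
    simp
  have hsd : IsSymmSndFDerivAt ℝ φ xstar := hφ.contDiffAt.isSymmSndFDerivAt (by norm_num)
  have hs : H.IsSymm := by
    ext a b
    rw [Matrix.transpose_apply, hkey, hkey]
    exact hsd.eq _ _
  have hHerm : H.IsHermitian := by
    rw [Matrix.IsHermitian, Matrix.conjTranspose_eq_transpose_of_trivial]
    exact hs
  have heigpos : ∀ j, 0 < hHerm.eigenvalues j := aux_eig_pos hHerm heig
  have hpsd : H.PosSemidef := hHerm.posSemidef_iff_eigenvalues_nonneg.2 fun j => (heigpos j).le
  have hdet : H.det ≠ 0 := by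
    rw [hHerm.det_eq_prod_eigenvalues]
    exact ne_of_gt (Finset.prod_pos fun j _ => by exact_mod_cast heigpos j)
  have hpd : ∀ v : ((i : Fin n) × Fin (m i)) → ℝ, v ≠ 0 → 0 < v ⬝ᵥ H *ᵥ v := by
    intro v hv
    have h0 : star v ⬝ᵥ H *ᵥ v = v ⬝ᵥ H *ᵥ v := by simp
    have hle : 0 ≤ v ⬝ᵥ H *ᵥ v := by
      have := hpsd.dotProduct_mulVec_nonneg v
      simpa [h0] using this
    rcases lt_or_eq_of_le hle with h | h
    · exact h
    · exfalso
      have : H *ᵥ v = 0 := (hpsd.dotProduct_mulVec_zero_iff v).1 (by simpa [h0] using h.symm)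
      have hinj : Function.Injective (H.mulVec) :=
        Matrix.mulVec_injective_iff_isUnit.2 ((Matrix.isUnit_iff_isUnit_det _).2
          (isUnit_iff_ne_zero.2 hdet))
      exact hv (hinj (by simpa using this))
  refine ⟨hs, hpd, hdet, ?_⟩
  intro i v hv
  set w : ((j : Fin n) × Fin (m j)) → ℝ :=
    fun p => if h : p.1 = i then v (h ▸ p.2) else 0 with hwdef
  have hw : ∀ p : (j : Fin n) × Fin (m j), w p = if h : p.1 = i then v (h ▸ p.2) else 0 :=
    fun p => rfl
  have hwne : w ≠ 0 := by
    intro h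
    apply hv
    funext q
    have : w ⟨i, q⟩ = 0 := by rw [h]; rfl
    simpa [hw] using this
  have hq : v ⬝ᵥ (Matrix.of fun p q => H ⟨i, p⟩ ⟨i, q⟩) *ᵥ v = w ⬝ᵥ H *ᵥ w := by
    rw [dotProduct_comm w, aux_dot i v w hw (H *ᵥ w)]
    have hmv : ∀ q, (H *ᵥ w) ⟨i, q⟩ = ∑ p, H ⟨i, q⟩ ⟨i, p⟩ * v p :=
      fun q => aux_dot i v w hw _
    simp only [hmv]
    simp only [Matrix.mulVec, Matrix.of_apply, dotProduct]
    exact Finset.sum_congr rfl fun q _ => mul_comm _ _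
  rw [hq]
  exact hpd w hwne
end

section
/- Fix real numbers a, b, c with a > 0, c > 0, and a·c < b². Consider the two-player potential game (f, f) on ℝ × ℝ with f(x₁, x₂) = (a/2)x₁² + b·x₁x₂ + (c/2)x₂², and let ω(x₁, x₂) = (∂f/∂x₁, ∂f/∂x₂) = (a·x₁ + b·x₂, b·x₁ + c·x₂). Then: (i) (0,0) is a local Nash equilibrium of (f, f): f(x₁, 0) ≥ f(0,0) for all x₁ and f(0, x₂) ≥ f(0,0) for all x₂, and indeed ω(0,0) = 0 with ∂²f/∂x₁² = a > 0 and ∂²f/∂x₂² = c > 0 (a differential Nash equilibrium); (ii) the symmetric Jacobian Dω = [[a, b],[b, c]] has determinant a·c − b² < 0, hence one strictly negative and one strictly positive real eigenvalue, so (0,0) is a strict saddle point of ẋ = −ω(x). -/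
open Matrix Polynomial

lemma quad_hasDerivAt (p q r x : ℝ) :
    HasDerivAt (fun y : ℝ => p * y ^ 2 + q * y + r) (2 * p * x + q) x := by
  have h := (((hasDerivAt_pow 2 x).const_mul p).add ((hasDerivAt_id x).const_mul q)).add_const r
  refine h.congr_deriv ?_
  simp; ring

lemma charpoly_fin_two_factor (a b c lm lp : ℝ) (h1 : lm + lp = a + c)
    (h2 : lm * lp = a * c - b * b) :
    (!![a, b; b, c]).charpoly = (X - C lm) * (X - C lp) := by
  have e1 : C lm + C lp = C a + C c := by rw [← C_add, ← C_add, h1]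
  have e2 : C lm * C lp = C a * C c - C b * C b := by
    rw [← C_mul, ← C_mul, ← C_mul, ← C_sub, h2]
  rw [Matrix.charpoly, charmatrix, det_fin_two]
  simp [Matrix.scalar]
  ring_nf
  linear_combination (X : ℝ[X]) * e1 - e2

lemma quad_deriv (p q r : ℝ) :
    deriv (fun y : ℝ => p * y ^ 2 + q * y + r) = fun x => 2 * p * x + q := by
  funext x
  exact (quad_hasDerivAt p q r x).deriv

/-- For `a > 0`, `c > 0`, `a·c < b²`, the two-player potential game
`(f, f)` with `f(x₁,x₂) = (a/2)x₁² + b·x₁x₂ + (c/2)x₂²` and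
`ω(x₁,x₂) = (a·x₁ + b·x₂, b·x₁ + c·x₂)` satisfies: (i) the origin is a local Nash
equilibrium (each player's cost is minimized in its own variable), `ω(0,0) = 0`, and the
own-block second derivatives are `a > 0` and `c > 0` (a differential Nash equilibrium);
(ii) the symmetric Jacobian `Dω = [[a,b],[b,c]]` has determinant `a·c - b² < 0`, hence
one strictly negative and one strictly positive real eigenvalue: the origin is a strict
saddle of `ẋ = -ω(x)`. -/
theorem stmt_9 (a b c : ℝ) (ha : 0 < a) (hc : 0 < c) (hb : a * c < b ^ 2)
    (f : ℝ → ℝ → ℝ)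
    (hf : ∀ x₁ x₂, f x₁ x₂ = a / 2 * x₁ ^ 2 + b * x₁ * x₂ + c / 2 * x₂ ^ 2) :
    -- ω is the vector of own partial derivatives of the potential/cost f
    (∀ x₁ x₂ : ℝ, deriv (fun y => f y x₂) x₁ = a * x₁ + b * x₂) ∧
    (∀ x₁ x₂ : ℝ, deriv (fun y => f x₁ y) x₂ = b * x₁ + c * x₂) ∧
    -- (i) the origin is a local Nash equilibrium and a differential Nash equilibrium
    (∀ x₁ : ℝ, f 0 0 ≤ f x₁ 0) ∧ (∀ x₂ : ℝ, f 0 0 ≤ f 0 x₂) ∧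
    (a * 0 + b * 0 = 0 ∧ b * 0 + c * 0 = 0) ∧
    (∀ x₁ x₂ : ℝ, deriv (deriv (fun y => f y x₂)) x₁ = a) ∧
    (∀ x₁ x₂ : ℝ, deriv (deriv (fun y => f x₁ y)) x₂ = c) ∧
    -- (ii) the symmetric Jacobian has negative determinant and a pair of real
    -- eigenvalues of opposite signs
    (!![a, b; b, c]).det = a * c - b ^ 2 ∧ (!![a, b; b, c]).det < 0 ∧
    (∃ lm lp : ℝ, lm < 0 ∧ 0 < lp ∧
      (!![a, b; b, c]).charpoly.aroots ℂ = {(lm : ℂ), (lp : ℂ)}) := by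
  have hfy : ∀ x₂ : ℝ, (fun y => f y x₂) =
      fun y : ℝ => a / 2 * y ^ 2 + (b * x₂) * y + c / 2 * x₂ ^ 2 := by
    intro x₂; funext y; rw [hf]; ring
  have hfx : ∀ x₁ : ℝ, (fun y => f x₁ y) =
      fun y : ℝ => c / 2 * y ^ 2 + (b * x₁) * y + a / 2 * x₁ ^ 2 := by
    intro x₁; funext y; rw [hf]; ring
  have d1 : ∀ x₁ x₂ : ℝ, deriv (fun y => f y x₂) x₁ = a * x₁ + b * x₂ := by
    intro x₁ x₂; rw [hfy, quad_deriv]; ring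
  have d2 : ∀ x₁ x₂ : ℝ, deriv (fun y => f x₁ y) x₂ = b * x₁ + c * x₂ := by
    intro x₁ x₂; rw [hfx, quad_deriv]; ring
  refine ⟨d1, d2, ?_, ?_, by norm_num, ?_, ?_, ?_, ?_, ?_⟩
  · intro x₁
    rw [hf, hf]
    nlinarith [sq_nonneg x₁, ha.le]
  · intro x₂
    rw [hf, hf]
    nlinarith [sq_nonneg x₂, hc.le]
  · intro x₁ x₂
    rw [hfy, quad_deriv]
    have : HasDerivAt (fun x : ℝ => 2 * (a / 2) * x + b * x₂) (2 * (a / 2)) x₁ := by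
      simpa using ((hasDerivAt_id x₁).const_mul (2 * (a / 2))).add_const (b * x₂)
    rw [this.deriv]; ring
  · intro x₁ x₂
    rw [hfx, quad_deriv]
    have : HasDerivAt (fun x : ℝ => 2 * (c / 2) * x + b * x₁) (2 * (c / 2)) x₂ := by
      simpa using ((hasDerivAt_id x₂).const_mul (2 * (c / 2))).add_const (b * x₁)
    rw [this.deriv]; ring
  · rw [det_fin_two]; simp; ring
  · rw [det_fin_two]; simp; nlinarith
  · set s : ℝ := Real.sqrt ((a + c) ^ 2 + 4 * (b ^ 2 - a * c)) with hs
    have hdisc : (0:ℝ) ≤ (a + c) ^ 2 + 4 * (b ^ 2 - a * c) := by nlinarith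
    have hs2 : s ^ 2 = (a + c) ^ 2 + 4 * (b ^ 2 - a * c) := Real.sq_sqrt hdisc
    have hsac : a + c < s := by
      have h0 : 0 ≤ s := Real.sqrt_nonneg _
      nlinarith
    refine ⟨(a + c - s) / 2, (a + c + s) / 2, by linarith, by linarith, ?_⟩
    set lm := (a + c - s) / 2
    set lp := (a + c + s) / 2
    have h1 : lm + lp = a + c := by simp [lm, lp]; ring
    have h2 : lm * lp = a * c - b * b := by
      have : lm * lp = ((a + c) ^ 2 - s ^ 2) / 4 := by simp [lm, lp]; ring
      rw [this, hs2]; ring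
    have hcp : (!![a, b; b, c]).charpoly = (X - C lm) * (X - C lp) :=
      charpoly_fin_two_factor a b c lm lp h1 h2
    rw [aroots_def, hcp, Polynomial.map_mul, Polynomial.map_sub, Polynomial.map_sub,
      map_X, map_C, map_C]
    rw [Polynomial.roots_mul (mul_ne_zero (X_sub_C_ne_zero _) (X_sub_C_ne_zero _)),
      roots_X_sub_C, roots_X_sub_C]
    rfl
end

section
/- Let ω : ℝ^m → ℝ^m be continuously differentiable with sup_{x∈ℝ^m} ‖Dω(x)‖₂ ≤ L < ∞, fix a block decomposition m = m₁ + ⋯ + mₙ and learning rates 0 < γᵢ < 1/L, and let Γ be the diagonal matrix with i-th diagonal block γᵢ·I_{mᵢ}. Define g : ℝ^m → ℝ^m by g(x) = x − Γ ω(x). Then: (i) g is injective; (ii) for every x ∈ ℝ^m, the spectral radius of Γ Dω(x) is strictly less than 1, so the derivative Dg(x) = I − Γ Dω(x) is an invertible linear map; (iii) g is a bijection of ℝ^m with continuously differentiable inverse, i.e., g is a C¹ diffeomorphism of ℝ^m. -/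
open Matrix Polynomial

section Aux
variable {ι : Type*} [Fintype ι] [DecidableEq ι]
set_option linter.unusedSectionVars false

lemma euclid_apply_sum (s : Finset ι) (f : ι → EuclideanSpace ℝ ι) (a : ι) :
    (∑ b ∈ s, f b) a = ∑ b ∈ s, f b a := by
  induction s using Finset.cons_induction with
  | empty => rfl
  | cons b s hb ih => rw [Finset.sum_cons, Finset.sum_cons, PiLp.add_apply, ih]

lemma euclid_sum_single (x : EuclideanSpace ℝ ι) :
    x = ∑ b, x b • EuclideanSpace.single b (1:ℝ) := by
  ext a
  rw [euclid_apply_sum]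
  simp [EuclideanSpace.single_apply, Finset.sum_ite_eq]

lemma euclid_norm_sq (x : EuclideanSpace ℝ ι) : ‖x‖ ^ 2 = ∑ i, x i ^ 2 := by
  rw [EuclideanSpace.norm_eq, Real.sq_sqrt (by positivity)]
  simp [Real.norm_eq_abs, sq_abs]

/-- The diagonal scaling continuous linear map on Euclidean space. -/
noncomputable def diagCLM (d : ι → ℝ) (c : ℝ) (hc : 0 ≤ c) (hd : ∀ a, |d a| ≤ c) :
    EuclideanSpace ℝ ι →L[ℝ] EuclideanSpace ℝ ι :=
  LinearMap.mkContinuous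
    { toFun := fun x => WithLp.toLp 2 (fun a => d a * x a)
      map_add' := fun x y => by ext a; simp [mul_add]
      map_smul' := fun r x => by ext a; simp [mul_comm, mul_left_comm] } c
    (by
      intro x
      simp only [LinearMap.coe_mk, AddHom.coe_mk]
      rw [show (c * ‖x‖) = Real.sqrt ((c * ‖x‖) ^ 2) from
        (Real.sqrt_sq (by positivity)).symm, EuclideanSpace.norm_eq]
      apply Real.sqrt_le_sqrt
      rw [mul_pow, euclid_norm_sq, Finset.mul_sum]
      apply Finset.sum_le_sum
      intro a _
      have hda := hd a
      have h3 : ‖d a * x a‖ ^ 2 = (d a)^2 * (x a)^2 := by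
        rw [Real.norm_eq_abs, sq_abs, mul_pow]
      rw [h3]
      have h4 : (d a)^2 ≤ c^2 := by
        rw [← sq_abs (d a)]
        gcongr
      nlinarith [sq_nonneg (x a)])

lemma diagCLM_apply (d : ι → ℝ) (c : ℝ) (hc : 0 ≤ c) (hd : ∀ a, |d a| ≤ c)
    (x : EuclideanSpace ℝ ι) (a : ι) : diagCLM d c hc hd x a = d a * x a := rfl

lemma diagCLM_norm_le (d : ι → ℝ) (c : ℝ) (hc : 0 ≤ c) (hd : ∀ a, |d a| ≤ c) :
    ‖diagCLM d c hc hd‖ ≤ c :=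
  LinearMap.mkContinuous_norm_le _ hc _

end Aux

/-- Let `ω : ℝ^m → ℝ^m` be `C¹` with the operator 2-norm of its
Jacobian bounded by `L` everywhere (we work on `EuclideanSpace`, so `‖fderiv ℝ ω x‖` is
the induced 2-norm). For per-agent learning rates `0 < γᵢ < 1/L` on the coordinate
blocks `m = m₁ + ⋯ + mₙ`, the simultaneous gradient-play map `g(x) = x - Γω(x)` is
(i) injective; (ii) at every `x` the matrix `ΓDω(x)` has spectral radius `< 1` (all its
complex eigenvalues have modulus `< 1`) and `Dg(x) = I - ΓDω(x)` is invertible;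
(iii) `g` is a bijection of `ℝ^m` with `C¹` inverse, i.e. a `C¹` diffeomorphism. -/
theorem stmt_11 {n : ℕ} (m : Fin n → ℕ)
    (ω : EuclideanSpace ℝ ((i : Fin n) × Fin (m i)) →
         EuclideanSpace ℝ ((i : Fin n) × Fin (m i)))
    (hω : ContDiff ℝ 1 ω)
    (L : ℝ) (hL : 0 < L)
    (hDω : ∀ x, ‖fderiv ℝ ω x‖ ≤ L)
    (γ : Fin n → ℝ) (hγ : ∀ i, 0 < γ i ∧ γ i < 1 / L)
    (g : EuclideanSpace ℝ ((i : Fin n) × Fin (m i)) →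
         EuclideanSpace ℝ ((i : Fin n) × Fin (m i)))
    (hg : ∀ (x : EuclideanSpace ℝ ((i : Fin n) × Fin (m i)))
        (a : (i : Fin n) × Fin (m i)), g x a = x a - γ a.1 * ω x a) :
    Function.Injective g ∧
    (∀ x : EuclideanSpace ℝ ((i : Fin n) × Fin (m i)),
      (∀ lam ∈ (Matrix.of fun a b : (i : Fin n) × Fin (m i) =>
          γ a.1 * fderiv ℝ ω x (EuclideanSpace.single b 1) a).charpoly.aroots ℂ,
        ‖lam‖ < 1) ∧
      IsUnit ((1 : Matrix ((i : Fin n) × Fin (m i)) ((i : Fin n) × Fin (m i)) ℝ) -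
        Matrix.of fun a b : (i : Fin n) × Fin (m i) =>
          γ a.1 * fderiv ℝ ω x (EuclideanSpace.single b 1) a)) ∧
    Function.Bijective g ∧ ContDiff ℝ 1 (Function.invFun g) := by
  -- a uniform bound on the learning rates
  obtain ⟨c, hc0, hcL, hγc⟩ : ∃ c : ℝ, 0 ≤ c ∧ c * L < 1 ∧ ∀ i, γ i ≤ c := by
    rcases Nat.eq_zero_or_pos n with hn | hn
    · exact ⟨0, le_refl _, by simpa using one_pos, fun i => absurd i.2 (by omega)⟩
    · have hne : (Finset.univ : Finset (Fin n)).Nonempty := by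
        simpa [Finset.univ_nonempty_iff] using Fin.pos_iff_nonempty.mp hn
      refine ⟨Finset.univ.sup' hne γ, ?_, ?_, fun i => Finset.le_sup' γ (Finset.mem_univ i)⟩
      · obtain ⟨i, _, hi⟩ := Finset.exists_mem_eq_sup' hne γ
        rw [hi]; exact (hγ i).1.le
      · rw [← lt_div_iff₀ hL]
        apply Finset.sup'_lt_iff hne |>.2
        intro i _
        exact (hγ i).2
  have hcd : ∀ a : (i : Fin n) × Fin (m i), |γ a.1| ≤ c := fun a => by
    rw [abs_of_pos (hγ a.1).1]; exact hγc a.1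
  set Γ := diagCLM (fun a : (i : Fin n) × Fin (m i) => γ a.1) c hc0 hcd with hΓ
  have hΓ_apply : ∀ (x : EuclideanSpace ℝ ((i : Fin n) × Fin (m i)))
      (a : (i : Fin n) × Fin (m i)), Γ x a = γ a.1 * x a := fun x a => rfl
  have hΓ_norm : ‖Γ‖ ≤ c := diagCLM_norm_le _ _ _ _
  have hωd : Differentiable ℝ ω := hω.differentiable one_ne_zero
  -- the map φ = Γ ∘ ω and its properties
  set φ := fun x => Γ (ω x) with hφ
  have hφ_diff : ContDiff ℝ 1 φ := Γ.contDiff.comp hω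
  have hgeq : g = fun x => x - φ x := by
    funext x
    ext a
    rw [hg x a]
    rfl
  have hcL0 : 0 ≤ c * L := mul_nonneg hc0 hL.le
  have hφ_fderiv : ∀ x, fderiv ℝ φ x = Γ.comp (fderiv ℝ ω x) := fun x =>
    (Γ.hasFDerivAt.comp x (hωd x).hasFDerivAt).fderiv
  have hφ_fderiv_norm : ∀ x, ‖fderiv ℝ φ x‖ ≤ c * L := by
    intro x
    rw [hφ_fderiv x]
    calc ‖Γ.comp (fderiv ℝ ω x)‖ ≤ ‖Γ‖ * ‖fderiv ℝ ω x‖ := Γ.opNorm_comp_le _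
    _ ≤ c * L := mul_le_mul hΓ_norm (hDω x) (norm_nonneg _) hc0
  have hφ_lip : ∀ x y, ‖φ x - φ y‖ ≤ (c * L) * ‖x - y‖ := by
    intro x y
    apply Convex.norm_image_sub_le_of_norm_fderiv_le
      (fun z _ => hφ_diff.differentiable one_ne_zero z)
      (fun z _ => hφ_fderiv_norm z) convex_univ (Set.mem_univ y) (Set.mem_univ x)
  -- `g` approximates the identity
  set Eq := ContinuousLinearEquiv.refl ℝ (EuclideanSpace ℝ ((i : Fin n) × Fin (m i))) with hEq
  have happrox : ApproximatesLinearOn g (Eq : _ →L[ℝ] _) Set.univ (c * L).toNNReal := by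
    intro x _ y _
    have h1 : g x - g y - (Eq : _ →L[ℝ] _) (x - y) = -(φ x - φ y) := by
      rw [hgeq]; simp [hEq]; abel
    rw [h1, norm_neg]
    calc ‖φ x - φ y‖ ≤ (c * L) * ‖x - y‖ := hφ_lip x y
    _ = ((c * L).toNNReal : ℝ) * ‖x - y‖ := by rw [Real.coe_toNNReal _ hcL0]
  have hKlt : Subsingleton (EuclideanSpace ℝ ((i : Fin n) × Fin (m i))) ∨
      (c * L).toNNReal < ‖(Eq.symm : EuclideanSpace ℝ ((i : Fin n) × Fin (m i)) →L[ℝ] EuclideanSpace ℝ ((i : Fin n) × Fin (m i)))‖₊⁻¹ := by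
    rcases subsingleton_or_nontrivial (EuclideanSpace ℝ ((i : Fin n) × Fin (m i))) with h | h
    · exact Or.inl h
    · refine Or.inr ?_
      have h2 : ‖(Eq.symm : EuclideanSpace ℝ ((i : Fin n) × Fin (m i)) →L[ℝ] EuclideanSpace ℝ ((i : Fin n) × Fin (m i)))‖₊ = 1 := by
        simp [hEq, ContinuousLinearEquiv.refl_symm]
      rw [h2, inv_one, ← NNReal.coe_lt_coe, Real.coe_toNNReal _ hcL0]
      exact hcL
  have hbij : Function.Bijective g := by
    have hcoe : ⇑(happrox.toHomeomorph g hKlt) = g := rfl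
    rw [← hcoe]
    exact (happrox.toHomeomorph g hKlt).bijective
  -- key pointwise facts about the linearization
  have hB_norm : ∀ x, ‖Γ.comp (fderiv ℝ ω x)‖ < 1 := fun x =>
    lt_of_le_of_lt (by rw [← hφ_fderiv x]; exact hφ_fderiv_norm x) hcL
  -- matrix = linear map in the standard basis, and the `mulVec` action
  have hMmul : ∀ (x : EuclideanSpace ℝ ((i : Fin n) × Fin (m i)))
      (u : EuclideanSpace ℝ ((i : Fin n) × Fin (m i))) (a : (i : Fin n) × Fin (m i)),
      ((Matrix.of fun a b : (i : Fin n) × Fin (m i) =>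
          γ a.1 * fderiv ℝ ω x (EuclideanSpace.single b 1) a) *ᵥ u) a
        = (Γ.comp (fderiv ℝ ω x)) u a := by
    intro x u a
    have h1 : fderiv ℝ ω x u = ∑ b, u b • fderiv ℝ ω x (EuclideanSpace.single b 1) := by
      conv_lhs => rw [euclid_sum_single u]
      rw [map_sum]
      simp only [_root_.map_smul]
    have h2 : (Γ.comp (fderiv ℝ ω x)) u a = γ a.1 * (fderiv ℝ ω x u) a := rfl
    rw [h2, h1, euclid_apply_sum]
    simp only [PiLp.smul_apply, smul_eq_mul]
    rw [Finset.mul_sum]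
    simp only [Matrix.mulVec, dotProduct, Matrix.of_apply]
    apply Finset.sum_congr rfl
    intro b _
    ring
  -- part (ii)
  have hii : ∀ x : EuclideanSpace ℝ ((i : Fin n) × Fin (m i)),
      (∀ lam ∈ (Matrix.of fun a b : (i : Fin n) × Fin (m i) =>
          γ a.1 * fderiv ℝ ω x (EuclideanSpace.single b 1) a).charpoly.aroots ℂ,
        ‖lam‖ < 1) ∧
      IsUnit ((1 : Matrix ((i : Fin n) × Fin (m i)) ((i : Fin n) × Fin (m i)) ℝ) -
        Matrix.of fun a b : (i : Fin n) × Fin (m i) =>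
          γ a.1 * fderiv ℝ ω x (EuclideanSpace.single b 1) a) := by
    intro x
    set B := Γ.comp (fderiv ℝ ω x) with hB
    set M := Matrix.of fun a b : (i : Fin n) × Fin (m i) =>
        γ a.1 * fderiv ℝ ω x (EuclideanSpace.single b 1) a with hM
    have hBnorm : ‖B‖ < 1 := hB_norm x
    have hBop : ∀ u, ‖B u‖ ≤ (c * L) * ‖u‖ := by
      intro u
      calc ‖B u‖ ≤ ‖B‖ * ‖u‖ := B.le_opNorm u
      _ ≤ (c * L) * ‖u‖ := by
          apply mul_le_mul_of_nonneg_right _ (norm_nonneg u)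
          rw [hB, ← hφ_fderiv x]; exact hφ_fderiv_norm x
    constructor
    · -- eigenvalue bound
      intro lam hlam
      have hroot : ((M.map (algebraMap ℝ ℂ)).charpoly).IsRoot lam := by
        rw [Matrix.charpoly_map, Polynomial.IsRoot, Polynomial.eval_map,
          ← Polynomial.aeval_def]
        exact (Polynomial.mem_aroots'.1 hlam).2
      have hdet : ((Matrix.diagonal (fun _ => lam)) - M.map (algebraMap ℝ ℂ)).det = 0 := by
        have h2 := (Polynomial.evalRingHom lam).map_det
          (charmatrix (M.map (algebraMap ℝ ℂ)))
        have h3 : (charmatrix (M.map (algebraMap ℝ ℂ))).map (Polynomial.evalRingHom lam)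
            = Matrix.diagonal (fun _ => lam) - M.map (algebraMap ℝ ℂ) := by
          ext a b
          by_cases h : a = b
          · subst h
            simp [Matrix.charmatrix_apply, Matrix.diagonal_apply_eq]
          · simp [Matrix.charmatrix_apply_ne _ _ _ h, Matrix.diagonal_apply_ne _ h,
              Matrix.map_apply]
        rw [RingHom.mapMatrix_apply, h3] at h2
        rw [← h2]
        exact hroot
      obtain ⟨v, hv0, hv⟩ := Matrix.exists_mulVec_eq_zero_iff.2 hdet
      have hMv : ∀ a, (M.map (algebraMap ℝ ℂ) *ᵥ v) a = lam * v a := by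
        intro a
        have h4 := congrFun hv a
        rw [Matrix.sub_mulVec] at h4
        have h5 : ((Matrix.diagonal (fun _ => lam)) *ᵥ v) a = lam * v a :=
          Matrix.mulVec_diagonal _ _ _
        have h6 : ((Matrix.diagonal fun _ => lam) *ᵥ v) a
            - ((M.map (algebraMap ℝ ℂ)) *ᵥ v) a = 0 := h4
        rw [h5] at h6
        exact (sub_eq_zero.mp h6).symm
      set vr : EuclideanSpace ℝ ((i : Fin n) × Fin (m i)) := WithLp.toLp 2 (fun a => (v a).re) with hvr
      set vi : EuclideanSpace ℝ ((i : Fin n) × Fin (m i)) := WithLp.toLp 2 (fun a => (v a).im) with hvi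
      have hre : ∀ a, ((M.map (algebraMap ℝ ℂ) *ᵥ v) a).re = (M *ᵥ vr) a := by
        intro a
        simp only [Matrix.mulVec, dotProduct, Matrix.map_apply]
        rw [Complex.re_sum]
        apply Finset.sum_congr rfl
        intro b _
        simp [Complex.mul_re, hvr]
      have him : ∀ a, ((M.map (algebraMap ℝ ℂ) *ᵥ v) a).im = (M *ᵥ vi) a := by
        intro a
        simp only [Matrix.mulVec, dotProduct, Matrix.map_apply]
        rw [Complex.im_sum]
        apply Finset.sum_congr rfl
        intro b _
        simp [Complex.mul_im, hvi]
      have hnormB : ∀ u : EuclideanSpace ℝ ((i : Fin n) × Fin (m i)),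
          ∑ a, ((M *ᵥ u) a) ^ 2 ≤ (c * L) ^ 2 * ∑ a, (u a) ^ 2 := by
        intro u
        have h1 : ∑ a, ((M *ᵥ u) a) ^ 2 = ‖B u‖ ^ 2 := by
          rw [euclid_norm_sq]
          apply Finset.sum_congr rfl
          intro a _
          rw [hMmul x u a]
        rw [h1, ← euclid_norm_sq u]
        calc ‖B u‖ ^ 2 ≤ ((c * L) * ‖u‖) ^ 2 := by
              apply pow_le_pow_left₀ (norm_nonneg _) (hBop u)
        _ = (c * L) ^ 2 * ‖u‖ ^ 2 := by ring
      have hS : 0 < ∑ a, Complex.normSq (v a) := by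
        have hex : ∃ a, v a ≠ 0 := by
          by_contra h
          push_neg at h
          exact hv0 (funext h)
        obtain ⟨a0, ha0⟩ := hex
        exact Finset.sum_pos' (fun a _ => Complex.normSq_nonneg _)
          ⟨a0, Finset.mem_univ a0, Complex.normSq_pos.2 ha0⟩
      have key : Complex.normSq lam * ∑ a, Complex.normSq (v a)
          ≤ (c * L) ^ 2 * ∑ a, Complex.normSq (v a) := by
        have h1 : ∀ a, Complex.normSq (lam * v a)
            = ((M *ᵥ vr) a) ^ 2 + ((M *ᵥ vi) a) ^ 2 := by
          intro a
          rw [← hMv a, Complex.normSq_apply, hre a, him a]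
          ring
        calc Complex.normSq lam * ∑ a, Complex.normSq (v a)
            = ∑ a, Complex.normSq (lam * v a) := by
              rw [Finset.mul_sum]
              apply Finset.sum_congr rfl
              intro a _
              rw [Complex.normSq_mul]
        _ = ∑ a, (((M *ᵥ vr) a) ^ 2 + ((M *ᵥ vi) a) ^ 2) :=
              Finset.sum_congr rfl fun a _ => h1 a
        _ = (∑ a, ((M *ᵥ vr) a) ^ 2) + ∑ a, ((M *ᵥ vi) a) ^ 2 := Finset.sum_add_distrib
        _ ≤ (c * L) ^ 2 * (∑ a, (vr a) ^ 2) + (c * L) ^ 2 * ∑ a, (vi a) ^ 2 :=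
              add_le_add (hnormB vr) (hnormB vi)
        _ = (c * L) ^ 2 * ∑ a, ((vr a) ^ 2 + (vi a) ^ 2) := by
              rw [Finset.sum_add_distrib]; ring
        _ = (c * L) ^ 2 * ∑ a, Complex.normSq (v a) := by
              congr 1
              apply Finset.sum_congr rfl
              intro a _
              rw [Complex.normSq_apply]
              ring
      have h7 : Complex.normSq lam ≤ (c * L) ^ 2 :=
        le_of_mul_le_mul_right key hS
      have h8 : (c * L) ^ 2 < 1 := by nlinarith
      rw [Complex.norm_def, show (1 : ℝ) = Real.sqrt 1 from Real.sqrt_one.symm]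
      exact Real.sqrt_lt_sqrt (Complex.normSq_nonneg _) (lt_of_le_of_lt h7 h8)
    · -- invertibility
      have hunit : IsUnit ((1 : _) - B) :=
        isUnit_one_sub_of_norm_lt_one hBnorm
      have hbijB : Function.Bijective ((1 : EuclideanSpace ℝ ((i : Fin n) × Fin (m i)) →L[ℝ]
          EuclideanSpace ℝ ((i : Fin n) × Fin (m i))) - B) := by
        set e' := ContinuousLinearEquiv.unitsEquiv ℝ
          (EuclideanSpace ℝ ((i : Fin n) × Fin (m i))) (Units.oneSub B hBnorm) with he'
        have hcoe : ⇑e' = ⇑((1 : EuclideanSpace ℝ ((i : Fin n) × Fin (m i)) →L[ℝ]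
            EuclideanSpace ℝ ((i : Fin n) × Fin (m i))) - B) := rfl
        rw [← hcoe]
        exact e'.bijective
      have hEndUnit : IsUnit ((1 : Module.End ℝ (EuclideanSpace ℝ ((i : Fin n) × Fin (m i))))
          - B.toLinearMap) := by
        rw [Module.End.isUnit_iff]
        exact hbijB
      have halg := hEndUnit.map
        (LinearMap.toMatrixAlgEquiv (EuclideanSpace.basisFun ((i : Fin n) × Fin (m i)) ℝ).toBasis)
      have hrw : (LinearMap.toMatrixAlgEquiv (EuclideanSpace.basisFun ((i : Fin n) × Fin (m i)) ℝ).toBasis)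
          ((1 : Module.End ℝ (EuclideanSpace ℝ ((i : Fin n) × Fin (m i)))) - B.toLinearMap)
          = (1 : Matrix ((i : Fin n) × Fin (m i)) ((i : Fin n) × Fin (m i)) ℝ) - M := by
        rw [map_sub, _root_.map_one]
        congr 1
      rw [hrw] at halg
      exact halg
  refine ⟨hbij.1, hii, hbij, ?_⟩
  -- C¹ inverse
  have hgc : ContDiff ℝ 1 g := by rw [hgeq]; exact contDiff_id.sub hφ_diff
  rw [contDiff_iff_contDiffAt]
  intro y
  obtain ⟨x, rfl⟩ := hbij.2 y
  set B := Γ.comp (fderiv ℝ ω x) with hB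
  set e := ContinuousLinearEquiv.unitsEquiv ℝ (EuclideanSpace ℝ ((i : Fin n) × Fin (m i)))
    (Units.oneSub B (hB_norm x)) with he
  have hfd : HasFDerivAt g (e : _ →L[ℝ] _) x := by
    have h1 : HasFDerivAt g ((ContinuousLinearMap.id ℝ _) - B) x := by
      rw [hgeq]
      exact (hasFDerivAt_id x).sub (Γ.hasFDerivAt.comp x (hωd x).hasFDerivAt)
    convert h1 using 1
    rfl
  have hli := hgc.contDiffAt.to_localInverse (f' := e) hfd one_ne_zero
  apply hli.congr_of_eventuallyEq
  have h2 := (hgc.contDiffAt.hasStrictFDerivAt' (f' := e) hfd one_ne_zero).eventually_right_inverse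
  filter_upwards [h2] with y' hy'
  conv_lhs => rw [← hy']
  rw [Function.leftInverse_invFun hbij.1]
  rfl
end
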